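/- Odds-ratio difference representation: Let (X, Y, R₁, R₂) take finitely many values with R₂ ≥ R₁ ∈ {0,1} and all relevant probabilities positive. With A_k(x) = logit π_k(x,0) and Γ_k as above (k=1,2), and D(x) = A₂(x) − A₁(x), if Γ₁ ≡ Γ₂ then for all (x,y): P(R₁=1, X=x, Y=y) / P(R₁=0, X=x, Y=y) = P(R₁=1, X=x, Y=y) / P(R₂=1, R₁=0, X=x, Y=y) − exp(−D(x)). -/

import Mathlib

/-- Probability of an event `A` under weights `w` on a finite sample space. -/
noncomputable def Pr {Ω : Type*} [Fintype Ω] (w : Ω → ℝ) (A : Ω → Prop) : ℝ :=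
  ∑ ω, Set.indicator {ω' | A ω'} w ω

/-- Expectation of `f` under weights `w`. -/
noncomputable def Ex {Ω : Type*} [Fintype Ω] (w : Ω → ℝ) (f : Ω → ℝ) : ℝ :=
  ∑ ω, w ω * f ω

/-- Conditional probability P(A | B). -/
noncomputable def cPr {Ω : Type*} [Fintype Ω] (w : Ω → ℝ) (A B : Ω → Prop) : ℝ :=
  Pr w (fun ω => A ω ∧ B ω) / Pr w B

/-- Conditional expectation E[f | B]. -/
noncomputable def cEx {Ω : Type*} [Fintype Ω] (w : Ω → ℝ) (f : Ω → ℝ) (B : Ω → Prop) : ℝ :=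
  (∑ ω, Set.indicator {ω' | B ω'} (fun ω' => w ω' * f ω') ω) / Pr w B

/-- Real-valued indicator of a Boolean. -/
noncomputable def ind (b : Bool) : ℝ := if b then 1 else 0

/-- logit(p) = log(p / (1 − p)). -/
noncomputable def logit (p : ℝ) : ℝ := Real.log (p / (1 - p))

/-- Log odds ratio function of a propensity `π`, with reference outcome `0`. -/
noncomputable def GammaOf {𝒳 𝒴 : Type*} [Zero 𝒴] (π : 𝒳 → 𝒴 → ℝ) (x : 𝒳) (y : 𝒴) : ℝ :=
  Real.log (π x y * (1 - π x 0) / ((1 - π x y) * π x 0))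



lemma Pr_congr' {Ω : Type*} [Fintype Ω] (w : Ω → ℝ) {A B : Ω → Prop}
    (h : ∀ ω, A ω ↔ B ω) : Pr w A = Pr w B := by
  unfold Pr
  have : {ω' | A ω'} = {ω' | B ω'} := Set.ext h
  rw [this]

lemma Pr_add' {Ω : Type*} [Fintype Ω] (w : Ω → ℝ) (A B C : Ω → Prop)
    (h : ∀ ω, A ω ↔ B ω ∨ C ω) (hdisj : ∀ ω, ¬ (B ω ∧ C ω)) :
    Pr w A = Pr w B + Pr w C := by
  classical
  unfold Pr
  rw [← Finset.sum_add_distrib]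
  refine Finset.sum_congr rfl fun ω _ => ?_
  simp only [Set.indicator_apply, Set.mem_setOf_eq]
  by_cases hB : B ω
  · have hA : A ω := (h ω).2 (Or.inl hB)
    have hC : ¬ C ω := fun hc => hdisj ω ⟨hB, hc⟩
    simp [hA, hB, hC]
  · by_cases hC : C ω
    · have hA : A ω := (h ω).2 (Or.inr hC)
      simp [hA, hB, hC]
    · have hA : ¬ A ω := fun hA => ((h ω).1 hA).elim hB hC
      simp [hA, hB, hC]

/-- Odds-ratio difference representation: with D(x) = A₂(x) − A₁(x) and
Γ₁ ≡ Γ₂, the unidentified odds P(R₁=1,x,y)/P(R₁=0,x,y) equal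
P(R₁=1,x,y)/P(R₂=1,R₁=0,x,y) − exp(−D(x)). -/
theorem stmt14 {Ω 𝒳 𝒴 : Type*} [Fintype Ω] [Fintype 𝒳] [Fintype 𝒴] [Zero 𝒴]
    (w : Ω → ℝ) (hw : ∀ ω, 0 < w ω) (hsum : ∑ ω, w ω = 1)
    (X : Ω → 𝒳) (Y : Ω → 𝒴) (R₁ R₂ : Ω → Bool)
    (hmono : ∀ ω, R₁ ω = true → R₂ ω = true)
    (hpos₁ : ∀ x y, 0 < Pr w (fun ω => R₁ ω = true ∧ X ω = x ∧ Y ω = y))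
    (hpos₂ : ∀ x y, 0 < Pr w (fun ω => R₂ ω = true ∧ R₁ ω = false ∧ X ω = x ∧ Y ω = y))
    (hpos₃ : ∀ x y, 0 < Pr w (fun ω => R₂ ω = false ∧ R₁ ω = false ∧ X ω = x ∧ Y ω = y))
    (π₁ π₂ : 𝒳 → 𝒴 → ℝ)
    (hπ₁def : ∀ x y, π₁ x y =
      cPr w (fun ω => R₁ ω = true) (fun ω => X ω = x ∧ Y ω = y))
    (hπ₂def : ∀ x y, π₂ x y =
      cPr w (fun ω => R₂ ω = true) (fun ω => R₁ ω = false ∧ X ω = x ∧ Y ω = y))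
    (hΓ : ∀ x y, GammaOf π₁ x y = GammaOf π₂ x y) :
    ∀ x y,
      Pr w (fun ω => R₁ ω = true ∧ X ω = x ∧ Y ω = y) /
          Pr w (fun ω => R₁ ω = false ∧ X ω = x ∧ Y ω = y) =
        Pr w (fun ω => R₁ ω = true ∧ X ω = x ∧ Y ω = y) /
            Pr w (fun ω => R₂ ω = true ∧ R₁ ω = false ∧ X ω = x ∧ Y ω = y) -
          Real.exp (-(logit (π₂ x 0) - logit (π₁ x 0))) := by
  intro x y
  set a := Pr w (fun ω => R₁ ω = true ∧ X ω = x ∧ Y ω = y) with ha_def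
  set b := Pr w (fun ω => R₁ ω = false ∧ X ω = x ∧ Y ω = y) with hb_def
  set c := Pr w (fun ω => R₂ ω = true ∧ R₁ ω = false ∧ X ω = x ∧ Y ω = y) with hc_def
  set d := Pr w (fun ω => R₂ ω = false ∧ R₁ ω = false ∧ X ω = x ∧ Y ω = y) with hd_def
  set a0 := Pr w (fun ω => R₁ ω = true ∧ X ω = x ∧ Y ω = 0) with ha0_def
  set b0 := Pr w (fun ω => R₁ ω = false ∧ X ω = x ∧ Y ω = 0) with hb0_def
  set c0 := Pr w (fun ω => R₂ ω = true ∧ R₁ ω = false ∧ X ω = x ∧ Y ω = 0) with hc0_def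
  set d0 := Pr w (fun ω => R₂ ω = false ∧ R₁ ω = false ∧ X ω = x ∧ Y ω = 0) with hd0_def
  clear_value a b c d a0 b0 c0 d0
  have ha : 0 < a := by rw [ha_def]; exact hpos₁ x y
  have ha0 : 0 < a0 := by rw [ha0_def]; exact hpos₁ x 0
  have hc : 0 < c := by rw [hc_def]; exact hpos₂ x y
  have hc0 : 0 < c0 := by rw [hc0_def]; exact hpos₂ x 0
  have hd : 0 < d := by rw [hd_def]; exact hpos₃ x y
  have hd0 : 0 < d0 := by rw [hd0_def]; exact hpos₃ x 0
  have hb : b = c + d := by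
    rw [hb_def, hc_def, hd_def]
    refine Pr_add' w _ _ _ (fun ω => ?_) (fun ω => ?_)
    · cases h2 : R₂ ω <;> simp [h2] <;> tauto
    · rintro ⟨⟨h1, -⟩, ⟨h2, -⟩⟩
      simp [h1] at h2
  have hb0 : b0 = c0 + d0 := by
    rw [hb0_def, hc0_def, hd0_def]
    refine Pr_add' w _ _ _ (fun ω => ?_) (fun ω => ?_)
    · cases h2 : R₂ ω <;> simp [h2] <;> tauto
    · rintro ⟨⟨h1, -⟩, ⟨h2, -⟩⟩
      simp [h1] at h2
  have hbpos : 0 < b := by rw [hb]; linarith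
  have hb0pos : 0 < b0 := by rw [hb0]; linarith
  have hden : Pr w (fun ω => X ω = x ∧ Y ω = y) = a + b := by
    rw [ha_def, hb_def]
    refine Pr_add' w _ _ _ (fun ω => ?_) (fun ω => ?_)
    · cases h1 : R₁ ω <;> simp [h1]
    · rintro ⟨⟨h1, -⟩, ⟨h2, -⟩⟩
      simp [h1] at h2
  have hden0 : Pr w (fun ω => X ω = x ∧ Y ω = 0) = a0 + b0 := by
    rw [ha0_def, hb0_def]
    refine Pr_add' w _ _ _ (fun ω => ?_) (fun ω => ?_)
    · cases h1 : R₁ ω <;> simp [h1]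
    · rintro ⟨⟨h1, -⟩, ⟨h2, -⟩⟩
      simp [h1] at h2
  have hπ₁y : π₁ x y = a / (a + b) := by
    rw [hπ₁def x y]; simp only [cPr]; rw [hden, ← ha_def]
  have hπ₁0 : π₁ x 0 = a0 / (a0 + b0) := by
    rw [hπ₁def x 0]; simp only [cPr]; rw [hden0, ← ha0_def]
  have hπ₂y : π₂ x y = c / b := by
    rw [hπ₂def x y]; simp only [cPr]; rw [← hc_def, ← hb_def]
  have hπ₂0 : π₂ x 0 = c0 / b0 := by
    rw [hπ₂def x 0]; simp only [cPr]; rw [← hc0_def, ← hb0_def]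
  have habpos : (0:ℝ) < a + b := by linarith
  have hane : a ≠ 0 := ha.ne'
  have hbne : b ≠ 0 := hbpos.ne'
  have hcne : c ≠ 0 := hc.ne'
  have hdne : d ≠ 0 := hd.ne'
  have ha0ne : a0 ≠ 0 := ha0.ne'
  have hb0ne : b0 ≠ 0 := hb0pos.ne'
  have hc0ne : c0 ≠ 0 := hc0.ne'
  have hd0ne : d0 ≠ 0 := hd0.ne'
  have hab0pos : (0:ℝ) < a0 + b0 := by linarith
  have habne : a + b ≠ 0 := habpos.ne'
  have hab0ne : a0 + b0 ≠ 0 := hab0pos.ne'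
  have e1 : (1:ℝ) - a / (a + b) = b / (a + b) := by field_simp; ring
  have e2 : (1:ℝ) - a0 / (a0 + b0) = b0 / (a0 + b0) := by field_simp; ring
  have e3 : (1:ℝ) - c / b = d / b := by rw [hb]; field_simp; ring
  have e4 : (1:ℝ) - c0 / b0 = d0 / b0 := by rw [hb0]; field_simp; ring
  have harg1 : π₁ x y * (1 - π₁ x 0) / ((1 - π₁ x y) * π₁ x 0) = a * b0 / (b * a0) := by
    rw [hπ₁y, hπ₁0, e1, e2]
    field_simp
    try ring
  have harg2 : π₂ x y * (1 - π₂ x 0) / ((1 - π₂ x y) * π₂ x 0) = c * d0 / (d * c0) := by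
    rw [hπ₂y, hπ₂0, e3, e4]
    field_simp
    try ring
  have hΓ' := hΓ x y
  rw [GammaOf, GammaOf, harg1, harg2] at hΓ'
  have hpos1 : (0:ℝ) < a * b0 / (b * a0) := by positivity
  have hpos2 : (0:ℝ) < c * d0 / (d * c0) := by positivity
  have hcross : a * b0 / (b * a0) = c * d0 / (d * c0) := by
    have h := congrArg Real.exp hΓ'
    rwa [Real.exp_log hpos1, Real.exp_log hpos2] at h
  have hl2 : logit (π₂ x 0) = Real.log (c0 / d0) := by
    rw [logit, hπ₂0, e4]
    congr 1
    field_simp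
  have hl1 : logit (π₁ x 0) = Real.log (a0 / b0) := by
    rw [logit, hπ₁0, e2]
    congr 1
    field_simp
  have hexp : Real.exp (-(logit (π₂ x 0) - logit (π₁ x 0))) = a0 * d0 / (b0 * c0) := by
    rw [hl1, hl2, neg_sub, Real.exp_sub, Real.exp_log (by positivity),
        Real.exp_log (by positivity)]
    field_simp
    try ring
  rw [hexp]
  have hkey : a * d / (b * c) = a0 * d0 / (b0 * c0) := by
    rw [div_eq_div_iff (mul_pos hbpos ha0).ne' (mul_pos hd hc0).ne'] at hcross
    rw [div_eq_div_iff (mul_pos hbpos hc).ne' (mul_pos hb0pos hc0).ne']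
    linear_combination hcross
  rw [← hkey, hb]
  field_simp
  ring
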